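/- arXiv:0803.3213 — 3 statements merged into one kernel-verified Lean document; each statement's English description precedes it below -/
import Mathlib

section
/- Let L be a Γ-graded finite-dimensional complex Lie algebra of operators on a finite-dimensional space, graded by a finite abelian group Γ. If every homogeneous element a (i.e., a ∈ L_γ for some γ) has ad a nilpotent on L, then L is solvable. -/
attribute [local instance 100] LieRing.ofAssociativeRing
universe u uK uG
open LieModule

section helpers
set_option linter.unusedSectionVars false
variable {K : Type uK} [Field K] {Γ : Type uG} [AddCommGroup Γ] [Fintype Γ]
variable {g : Type u} [LieRing g] [LieAlgebra K g]

/-- existence of homogeneous decompositions -/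
lemma exists_decomp (C : Γ → Submodule K g) (hsup : (⨆ γ, C γ) = ⊤) (x : g) :
    ∃ c : Γ → g, (∀ γ, c γ ∈ C γ) ∧ ∑ γ, c γ = x := by
  have hx : x ∈ ⨆ γ, C γ := hsup ▸ Submodule.mem_top
  rw [Submodule.mem_iSup_iff_exists_finsupp] at hx
  obtain ⟨f, hf, hsum⟩ := hx
  refine ⟨fun γ => f γ, hf, ?_⟩
  rw [← hsum, Finsupp.sum]
  exact (Finset.sum_subset (Finset.subset_univ _)
    (fun i _ h => Finsupp.notMem_support_iff.mp h)).symm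

/-- the graded-subspace predicate -/
def IsGr (C : Γ → Submodule K g) (H : Submodule K g) : Prop :=
  ∀ c : Γ → g, (∀ γ, c γ ∈ C γ) → (∑ γ, c γ) ∈ H → ∀ γ, c γ ∈ H

lemma ad_pow_coe (𝔥 : LieSubalgebra K g) (b : 𝔥) (k : ℕ) (x : 𝔥) :
    ((((LieAlgebra.ad K 𝔥 b) ^ k) x : 𝔥) : g) = ((LieAlgebra.ad K g (b : g)) ^ k) (x : g) := by
  induction k generalizing x with
  | zero => rfl
  | succ k ih =>
    rw [pow_succ, pow_succ]
    simp only [Module.End.mul_apply]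
    rw [ih ((LieAlgebra.ad K 𝔥 b) x)]
    simp [LieAlgebra.ad_apply]

lemma ad_restrict_nilpotent (𝔥 : LieSubalgebra K g) (b : 𝔥)
    (h : IsNilpotent (LieAlgebra.ad K g (b : g))) : IsNilpotent (LieAlgebra.ad K 𝔥 b) := by
  obtain ⟨N, hN⟩ := h
  refine ⟨N, ?_⟩
  ext x
  have := ad_pow_coe 𝔥 b N x
  rw [hN] at this
  simpa using this

end helpers

section key
variable {K : Type uK} [Field K] {Γ : Type uG} [AddCommGroup Γ] [Fintype Γ]

theorem key_lemma (n : ℕ) :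
    ∀ (g : Type u) (M : Type u) [LieRing g] [LieAlgebra K g] [FiniteDimensional K g]
      [AddCommGroup M] [Module K M] [LieRingModule g M] [LieModule K g M] [Nontrivial M]
      (_ : Module.finrank K g ≤ n)
      (C : Γ → Submodule K g)
      (_ : (⨆ γ, C γ) = ⊤)
      (_ : ∀ c : Γ → g, (∀ γ, c γ ∈ C γ) → ∑ γ, c γ = 0 → ∀ γ, c γ = 0)
      (_ : ∀ γ δ : Γ, ∀ x ∈ C γ, ∀ y ∈ C δ, ⁅x, y⁆ ∈ C (γ + δ))
      (_ : ∀ γ, ∀ a ∈ C γ, IsNilpotent (LieAlgebra.ad K g a))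
      (_ : ∀ γ, ∀ a ∈ C γ, IsNilpotent (LieModule.toEnd K g M a)),
      ∃ m : M, m ≠ 0 ∧ ∀ γ, ∀ a ∈ C γ, ⁅a, m⁆ = (0 : M) := by
  induction n with
  | zero =>
    intro g M _ _ _ _ _ _ _ _ hn C hsup hz hgrad hnilad hnilM
    have hsg : Subsingleton g := by
      rw [← Module.finrank_zero_iff (R := K)]
      omega
    obtain ⟨m, hm⟩ := exists_ne (0 : M)
    exact ⟨m, hm, fun γ a _ => by rw [Subsingleton.elim a 0, zero_lie]⟩
  | succ n ih =>
    intro g M _ _ _ _ _ _ _ _ hn C hsup hz hgrad hnilad hnilM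
    rcases subsingleton_or_nontrivial g with hsg | hntg
    · obtain ⟨m, hm⟩ := exists_ne (0 : M)
      exact ⟨m, hm, fun γ a _ => by rw [Subsingleton.elim a 0, zero_lie]⟩
    -- the set of proper graded Lie subalgebras
    classical
    set s : Set (LieSubalgebra K g) := {H | IsGr C H.toSubmodule ∧ H ≠ ⊤} with hs_def
    have h_bot_mem : (⊥ : LieSubalgebra K g) ∈ s := by
      constructor
      · intro c hc hsum γ
        have := hz c hc (by simpa using hsum)
        simp [this γ]
      · intro h
        obtain ⟨x, y, hxy⟩ := hntg
        apply hxy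
        have hx : x ∈ (⊥ : LieSubalgebra K g) := h ▸ trivial
        have hy : y ∈ (⊥ : LieSubalgebra K g) := h ▸ trivial
        rw [LieSubalgebra.mem_bot] at hx hy
        rw [hx, hy]
    -- pick a maximal one by rank
    set rks : Set ℕ := (fun H : LieSubalgebra K g => Module.finrank K H.toSubmodule) '' s
    have hrks_ne : rks.Nonempty := ⟨_, ⟨⊥, h_bot_mem, rfl⟩⟩
    have hrks_bdd : BddAbove rks := by
      refine ⟨Module.finrank K g, ?_⟩
      rintro r ⟨H, _, rfl⟩
      exact Submodule.finrank_le _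
    obtain ⟨𝔥, h𝔥s, h𝔥rk⟩ := Nat.sSup_mem hrks_ne hrks_bdd
    obtain ⟨h_gr, h_ne⟩ := h𝔥s
    have h_max : ∀ H ∈ s, Module.finrank K H.toSubmodule ≤ Module.finrank K 𝔥.toSubmodule := by
      intro H hH
      have h1 : Module.finrank K H.toSubmodule ≤ sSup rks := le_csSup hrks_bdd ⟨H, hH, rfl⟩
      have h2 : Module.finrank K 𝔥.toSubmodule = sSup rks := h𝔥rk
      omega
    -- restricted grading on 𝔥
    let C' : Γ → Submodule K 𝔥 := fun γ => (C γ).comap (𝔥.incl : 𝔥 →ₗ⁅K⁆ g).toLinearMap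
    have hmemC' : ∀ (γ : Γ) (x : 𝔥), x ∈ C' γ ↔ (x : g) ∈ C γ := fun γ x => Iff.rfl
    have hsup' : (⨆ γ, C' γ) = ⊤ := by
      rw [eq_top_iff]
      rintro ⟨x, hx⟩ -
      obtain ⟨c, hc, hcx⟩ := exists_decomp C hsup x
      have hcH : ∀ γ, c γ ∈ 𝔥.toSubmodule := h_gr c hc (by rw [hcx]; exact hx)
      have hxs : (⟨x, hx⟩ : 𝔥) = ∑ γ, (⟨c γ, hcH γ⟩ : 𝔥) := by
        apply Subtype.ext
        simp only [AddSubmonoidClass.coe_finset_sum]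
        exact hcx.symm
      rw [hxs]
      refine Submodule.sum_mem _ fun γ _ => Submodule.mem_iSup_of_mem γ ?_
      exact (hmemC' γ _).mpr (hc γ)
    have hz' : ∀ c : Γ → 𝔥, (∀ γ, c γ ∈ C' γ) → ∑ γ, c γ = 0 → ∀ γ, c γ = 0 := by
      intro c hc hsum γ
      have hcoe : ∑ γ, ((c γ : g)) = 0 := by
        rw [← AddSubmonoidClass.coe_finset_sum, hsum]; rfl
      have := hz (fun γ => (c γ : g)) (fun γ => (hmemC' γ _).mp (hc γ)) hcoe γ
      exact Subtype.ext this
    have hgrad' : ∀ γ δ : Γ, ∀ x ∈ C' γ, ∀ y ∈ C' δ, ⁅x, y⁆ ∈ C' (γ + δ) := by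
      intro γ δ x hx y hy
      rw [hmemC'] at hx hy ⊢
      simpa using hgrad γ δ _ hx _ hy
    have hnilad' : ∀ γ, ∀ b ∈ C' γ, IsNilpotent (LieAlgebra.ad K 𝔥 b) := fun γ b hb =>
      ad_restrict_nilpotent 𝔥 b (hnilad γ _ ((hmemC' γ b).mp hb))
    have hnilM' : ∀ γ, ∀ b ∈ C' γ, IsNilpotent (LieModule.toEnd K 𝔥 M b) := by
      intro γ b hb
      have heq : LieModule.toEnd K 𝔥 M b = LieModule.toEnd K g M (b : g) := rfl
      rw [heq]
      exact hnilM γ _ ((hmemC' γ b).mp hb)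
    have hfr : Module.finrank K 𝔥 ≤ n := by
      have h_lt : 𝔥.toSubmodule < ⊤ := lt_of_le_of_ne le_top (by
        intro h
        exact h_ne (LieSubalgebra.toSubmodule_injective (by simpa using h)))
      have h12 := Submodule.finrank_lt (K := K) (V := g) h_lt.ne
      have h13 : Module.finrank K 𝔥 = Module.finrank K 𝔥.toSubmodule := rfl
      omega
    have h_lt : 𝔥.toSubmodule < ⊤ := lt_of_le_of_ne le_top (by
      intro h
      exact h_ne (LieSubalgebra.toSubmodule_injective (by simpa using h)))
    -- the quotient module g ⧸ 𝔥 as 𝔥-module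
    haveI : Nontrivial (g ⧸ 𝔥.toLieSubmodule) :=
      Submodule.Quotient.nontrivial_iff.mpr h_lt.ne
    have hnilQ : ∀ γ, ∀ b ∈ C' γ,
        IsNilpotent (LieModule.toEnd K 𝔥 (g ⧸ 𝔥.toLieSubmodule) b) := by
      intro γ b hb
      have hb' : IsNilpotent (LieAlgebra.ad K g (b : g)) := hnilad γ _ ((hmemC' γ b).mp hb)
      apply Module.End.IsNilpotent.mapQ ?_ hb'
      intro y hy
      simp only [Submodule.mem_comap, LieAlgebra.ad_apply]
      exact 𝔥.lie_mem b.2 hy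
    obtain ⟨mQ, hmQ0, hmQ⟩ := ih 𝔥 (g ⧸ 𝔥.toLieSubmodule) hfr C' hsup' hz' hgrad' hnilad' hnilQ
    obtain ⟨x, hxQ⟩ := LieSubmodule.Quotient.surjective_mk' 𝔥.toLieSubmodule mQ
    have hxH : x ∉ 𝔥.toSubmodule := by
      intro h
      exact hmQ0 (by rw [← hxQ]; exact (LieSubmodule.Quotient.mk_eq_zero _).mpr h)
    have hbx : ∀ δ : Γ, ∀ b, b ∈ C δ → ∀ hbH : b ∈ 𝔥, ⁅b, x⁆ ∈ 𝔥.toSubmodule := by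
      intro δ b hbC hbH
      have h0 : ⁅(⟨b, hbH⟩ : 𝔥), mQ⁆ = 0 := hmQ δ _ ((hmemC' δ _).mpr hbC)
      rw [← hxQ, ← LieModuleHom.map_lie] at h0
      exact (LieSubmodule.Quotient.mk_eq_zero _).mp h0
    -- decompose x and pick a homogeneous component outside 𝔥
    obtain ⟨c, hc, hcx⟩ := exists_decomp C hsup x
    have hex : ∃ γ₀, c γ₀ ∉ 𝔥.toSubmodule := by
      by_contra h
      push_neg at h
      exact hxH (by rw [← hcx]; exact Submodule.sum_mem _ fun γ _ => h γ)
    obtain ⟨γ₀, hγ₀⟩ := hex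
    set a := c γ₀ with ha_def
    have haC : a ∈ C γ₀ := hc γ₀
    have h_na1 : ∀ δ : Γ, ∀ b, b ∈ C δ → b ∈ 𝔥.toSubmodule → ⁅b, a⁆ ∈ 𝔥.toSubmodule := by
      intro δ b hbC hbH
      set d : Γ → g := fun γ => ⁅b, c (γ - δ)⁆ with hd_def
      have hdC : ∀ γ, d γ ∈ C γ := by
        intro γ
        have h5 := hgrad δ (γ - δ) b hbC (c (γ - δ)) (hc (γ - δ))
        have h6 : δ + (γ - δ) = γ := by abel
        rwa [h6] at h5
      have hdsum : ∑ γ, d γ = ⁅b, x⁆ := by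
        have h1 : ∑ γ, d γ = ∑ γ, ⁅b, c γ⁆ :=
          Fintype.sum_equiv (Equiv.subRight δ) d (fun γ => ⁅b, c γ⁆) (fun γ => rfl)
        have h2 := map_sum (LieAlgebra.ad K g b) c Finset.univ
        simp only [LieAlgebra.ad_apply] at h2
        rw [h1, ← hcx, h2]
      have h7 := h_gr d hdC (by rw [hdsum]; exact hbx δ b hbC hbH) (γ₀ + δ)
      have h8 : γ₀ + δ - δ = γ₀ := by abel
      simpa [hd_def, h8] using h7
    have h_na : ∀ b ∈ 𝔥.toSubmodule, ⁅b, a⁆ ∈ 𝔥.toSubmodule := by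
      intro b hbH
      obtain ⟨e, he, heb⟩ := exists_decomp C hsup b
      have heH : ∀ δ, e δ ∈ 𝔥.toSubmodule := h_gr e he (by rw [heb]; exact hbH)
      have h3 : LieAlgebra.ad K g b = ∑ δ, LieAlgebra.ad K g (e δ) := by
        have h3' := map_sum (LieAlgebra.ad K g).toLinearMap e Finset.univ
        simp only [LieHom.coe_toLinearMap] at h3'
        rw [← heb]
        exact h3'
      have h9 : ⁅b, a⁆ = ∑ δ, ⁅e δ, a⁆ := by
        calc ⁅b, a⁆ = (LieAlgebra.ad K g b) a := by simp
          _ = (∑ δ, LieAlgebra.ad K g (e δ)) a := by rw [h3]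
          _ = ∑ δ, ⁅e δ, a⁆ := by simp [LinearMap.sum_apply]
      rw [h9]
      exact Submodule.sum_mem _ fun δ _ => h_na1 δ (e δ) (he δ) (heH δ)
    have hah : ∀ h ∈ 𝔥.toSubmodule, ⁅a, h⁆ ∈ 𝔥.toSubmodule := by
      intro h hh
      rw [← lie_skew]
      exact Submodule.neg_mem _ (h_na h hh)
    -- enlarge 𝔥 by a
    have h_lie_mem' : ∀ {y z : g}, y ∈ 𝔥.toSubmodule ⊔ (K ∙ a) → z ∈ 𝔥.toSubmodule ⊔ (K ∙ a) →
        ⁅y, z⁆ ∈ 𝔥.toSubmodule ⊔ (K ∙ a) := by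
      intro y z hy hz2
      obtain ⟨h₁, hh₁, y', hy', rfl⟩ := Submodule.mem_sup.mp hy
      obtain ⟨h₂, hh₂, z', hz', rfl⟩ := Submodule.mem_sup.mp hz2
      obtain ⟨t, rfl⟩ := Submodule.mem_span_singleton.mp hy'
      obtain ⟨u, rfl⟩ := Submodule.mem_span_singleton.mp hz'
      refine Submodule.mem_sup_left (?_ : _ ∈ 𝔥.toSubmodule)
      have p1 : ⁅h₁, h₂⁆ ∈ 𝔥.toSubmodule := 𝔥.lie_mem hh₁ hh₂
      have p2 : ⁅h₁, a⁆ ∈ 𝔥.toSubmodule := h_na h₁ hh₁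
      have p3 : ⁅a, h₂⁆ ∈ 𝔥.toSubmodule := hah h₂ hh₂
      simp only [lie_add, add_lie, lie_smul, smul_lie, lie_self, smul_zero, add_zero]
      exact add_mem (add_mem p1 (Submodule.smul_mem _ _ p3)) (Submodule.smul_mem _ _ p2)
    let H' : LieSubalgebra K g :=
      { (𝔥.toSubmodule ⊔ (K ∙ a) : Submodule K g) with
        lie_mem' := fun {y z} hy hz2 => h_lie_mem' hy hz2 }
    have hH'sub : H'.toSubmodule = 𝔥.toSubmodule ⊔ (K ∙ a) := rfl
    have ha_mem : a ∈ H'.toSubmodule :=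
      Submodule.mem_sup_right (Submodule.mem_span_singleton_self a)
    have h_lt' : 𝔥.toSubmodule < H'.toSubmodule :=
      lt_of_le_of_ne le_sup_left (fun h => hγ₀ (h ▸ ha_mem))
    have h_grH' : IsGr C H'.toSubmodule := by
      intro c' hc' hsum γ
      obtain ⟨h, hh, y, hy, hdecomp⟩ := Submodule.mem_sup.mp hsum
      obtain ⟨t, rfl⟩ := Submodule.mem_span_singleton.mp hy
      obtain ⟨e, he, heh⟩ := exists_decomp C hsup h
      have heH : ∀ γ, e γ ∈ 𝔥.toSubmodule := h_gr e he (by rw [heh]; exact hh)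
      set f : Γ → g := fun γ => e γ + if γ = γ₀ then t • a else 0 with hf_def
      have hfC : ∀ γ, f γ ∈ C γ := by
        intro γ
        by_cases hγ : γ = γ₀
        · subst hγ
          simp only [hf_def, if_pos rfl]
          exact add_mem (he γ) (Submodule.smul_mem _ _ haC)
        · simpa [hf_def, hγ] using he γ
      have hfsum : ∑ γ, f γ = ∑ γ, c' γ := by
        rw [← hdecomp, ← heh]
        simp [hf_def, Finset.sum_add_distrib, Finset.sum_ite_eq']
      have hzero := hz (fun γ => c' γ - f γ)
        (fun γ => Submodule.sub_mem _ (hc' γ) (hfC γ))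
        (by rw [Finset.sum_sub_distrib, hfsum, sub_self]) γ
      have hcf : c' γ = f γ := by
        have := sub_eq_zero.mp hzero
        exact this
      rw [hcf]
      by_cases hγ : γ = γ₀
      · subst hγ
        simp only [hf_def, if_pos rfl]
        exact add_mem (Submodule.mem_sup_left (heH γ))
          (Submodule.mem_sup_right (Submodule.smul_mem _ _ (Submodule.mem_span_singleton_self a)))
      · have := Submodule.mem_sup_left (S := 𝔥.toSubmodule) (T := (K ∙ a)) (heH γ)
        simpa [hf_def, hγ] using (show e γ ∈ H' from this)
    have hsup_a : 𝔥.toSubmodule ⊔ (K ∙ a) = ⊤ := by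
      by_contra hne'
      have hH'ne : H' ≠ ⊤ := by
        intro h
        apply hne'
        rw [← hH'sub, h]
        rfl
      have h1 := h_max H' ⟨h_grH', hH'ne⟩
      have h2 := Submodule.finrank_lt_finrank_of_lt h_lt'
      omega
    -- the common kernel of 𝔥 acting on M
    obtain ⟨m₀, hm₀0, hm₀⟩ := ih 𝔥 M hfr C' hsup' hz' hgrad' hnilad' hnilM'
    have hWmem : ∀ m : M, (∀ b ∈ 𝔥.toSubmodule, ⁅b, m⁆ = 0) ∨ True := fun _ => Or.inr trivial
    have hm₀W : ∀ b ∈ 𝔥.toSubmodule, ⁅b, m₀⁆ = (0 : M) := by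
      intro b hb
      obtain ⟨e, he, heb⟩ := exists_decomp C' hsup' ⟨b, hb⟩
      have h4 : LieModule.toEnd K 𝔥 M (⟨b, hb⟩ : 𝔥) = ∑ δ, LieModule.toEnd K 𝔥 M (e δ) := by
        have h4' := map_sum (LieModule.toEnd K 𝔥 M).toLinearMap e Finset.univ
        simp only [LieHom.coe_toLinearMap] at h4'
        rw [← heb]
        exact h4'
      calc ⁅b, m₀⁆ = (LieModule.toEnd K 𝔥 M (⟨b, hb⟩ : 𝔥)) m₀ := rfl
        _ = ∑ δ, (LieModule.toEnd K 𝔥 M (e δ)) m₀ := by rw [h4]; simp [LinearMap.sum_apply]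
        _ = 0 := Finset.sum_eq_zero fun δ _ => by
            simpa [LieModule.toEnd_apply_apply] using hm₀ δ (e δ) (he δ)
    have hWa : ∀ m : M, (∀ b ∈ 𝔥.toSubmodule, ⁅b, m⁆ = (0 : M)) →
        ∀ b ∈ 𝔥.toSubmodule, ⁅b, ⁅a, m⁆⁆ = (0 : M) := by
      intro m hm b hb
      rw [leibniz_lie, hm _ (h_na b hb), hm b hb, lie_zero, add_zero]
    -- iterate a on m₀
    have hWpow : ∀ j : ℕ, ∀ b ∈ 𝔥.toSubmodule,
        ⁅b, ((LieModule.toEnd K g M a) ^ j) m₀⁆ = (0 : M) := by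
      intro j
      induction j with
      | zero => simpa using hm₀W
      | succ j hj =>
        intro b hb
        rw [pow_succ']
        simp only [Module.End.mul_apply]
        have := hWa _ hj b hb
        simpa [LieModule.toEnd_apply_apply] using this
    obtain ⟨N, hN⟩ := hnilM γ₀ a haC
    have hP : ∃ k, ((LieModule.toEnd K g M a) ^ k) m₀ = 0 := ⟨N, by rw [hN]; rfl⟩
    set k := Nat.find hP with hk_def
    have hk0 : k ≠ 0 := by
      intro h
      apply hm₀0
      have h14 := Nat.find_spec hP
      rw [← hk_def, h] at h14
      simpa using h14
    set w := ((LieModule.toEnd K g M a) ^ (k - 1)) m₀ with hw_def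
    have hw0 : w ≠ 0 := Nat.find_min hP (Nat.sub_lt (Nat.pos_of_ne_zero hk0) one_pos)
    have hwa : ⁅a, w⁆ = (0 : M) := by
      have h10 : ((LieModule.toEnd K g M a) ^ k) m₀ = 0 := Nat.find_spec hP
      have h11 : k = (k - 1) + 1 := (Nat.succ_pred_eq_of_pos (Nat.pos_of_ne_zero hk0)).symm
      rw [h11, pow_succ'] at h10
      simpa [LieModule.toEnd_apply_apply, hw_def] using h10
    refine ⟨w, hw0, ?_⟩
    intro γ b hbC
    have hbtop : b ∈ 𝔥.toSubmodule ⊔ (K ∙ a) := by rw [hsup_a]; trivial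
    obtain ⟨h, hh, y, hy, rfl⟩ := Submodule.mem_sup.mp hbtop
    obtain ⟨t, rfl⟩ := Submodule.mem_span_singleton.mp hy
    rw [add_lie, smul_lie, hWpow (k-1) h hh, hwa, smul_zero, add_zero]
end key

section nil
variable {K : Type uK} [Field K] {Γ : Type uG} [AddCommGroup Γ] [Fintype Γ]

theorem nil_lemma (g : Type u) [LieRing g] [LieAlgebra K g] [FiniteDimensional K g]
    (C : Γ → Submodule K g)
    (hsup : (⨆ γ, C γ) = ⊤)
    (hz : ∀ c : Γ → g, (∀ γ, c γ ∈ C γ) → ∑ γ, c γ = 0 → ∀ γ, c γ = 0)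
    (hgrad : ∀ γ δ : Γ, ∀ x ∈ C γ, ∀ y ∈ C δ, ⁅x, y⁆ ∈ C (γ + δ))
    (hnilad : ∀ γ, ∀ a ∈ C γ, IsNilpotent (LieAlgebra.ad K g a)) :
    ∀ (m : ℕ) (M : Type u) [AddCommGroup M] [Module K M] [LieRingModule g M] [LieModule K g M]
      [FiniteDimensional K M]
      (_ : Module.finrank K M ≤ m)
      (_ : ∀ γ, ∀ a ∈ C γ, IsNilpotent (LieModule.toEnd K g M a)),
      LieModule.IsNilpotent g M := by
  intro m
  induction m with
  | zero =>
    intro M _ _ _ _ _ hm _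
    have hsg : Subsingleton M := by
      rw [← Module.finrank_zero_iff (R := K)]
      omega
    exact LieModule.IsNilpotent.mk (R := K) (L := g) M (k := 0) (by ext mm; simpa using Subsingleton.elim mm 0)
  | succ m ihm =>
    intro M _ _ _ _ _ hm hnilM
    rcases subsingleton_or_nontrivial M with hsg | hnt
    · exact LieModule.IsNilpotent.mk (R := K) (L := g) M (k := 0) (by ext mm; simpa using Subsingleton.elim mm 0)
    -- find a nonzero central vector
    obtain ⟨m₀, hm₀0, hm₀⟩ := key_lemma (Module.finrank K g) g M le_rfl C hsup hz hgrad hnilad hnilM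
    set W : LieSubmodule K g M := LieModule.maxTrivSubmodule K g M with hW_def
    have hm₀W : m₀ ∈ W := by
      rw [hW_def, LieModule.mem_maxTrivSubmodule]
      intro x
      obtain ⟨c, hc, hcx⟩ := exists_decomp C hsup x
      have h4 : LieModule.toEnd K g M x = ∑ δ, LieModule.toEnd K g M (c δ) := by
        have h4' := map_sum (LieModule.toEnd K g M).toLinearMap c Finset.univ
        simp only [LieHom.coe_toLinearMap] at h4'
        rw [← hcx]
        exact h4'
      calc ⁅x, m₀⁆ = (LieModule.toEnd K g M x) m₀ := rfl
        _ = ∑ δ, (LieModule.toEnd K g M (c δ)) m₀ := by rw [h4]; simp [LinearMap.sum_apply]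
        _ = 0 := Finset.sum_eq_zero fun δ _ => by
            simpa [LieModule.toEnd_apply_apply] using hm₀ δ (c δ) (hc δ)
    have hWne : W ≠ ⊥ := by
      intro h
      rw [h, LieSubmodule.mem_bot] at hm₀W
      exact hm₀0 hm₀W
    -- quotient by W
    have hnilQ : ∀ γ, ∀ a ∈ C γ, IsNilpotent (LieModule.toEnd K g (M ⧸ W) a) := by
      intro γ a haC
      apply Module.End.IsNilpotent.mapQ ?_ (hnilM γ a haC)
      intro y hy
      simp only [Submodule.mem_comap]
      exact W.lie_mem hy
    have hfrQ : Module.finrank K (M ⧸ W) ≤ m := by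
      have h1 : Module.finrank K (M ⧸ W.toSubmodule) + Module.finrank K W.toSubmodule
          = Module.finrank K M := Submodule.finrank_quotient_add_finrank _
      have h2 : 0 < Module.finrank K W.toSubmodule := by
        rw [Module.finrank_pos_iff]
        refine ⟨⟨m₀, hm₀W⟩, 0, fun hh => hm₀0 ?_⟩
        simpa using hh
      have h3 : Module.finrank K (M ⧸ W) = Module.finrank K (M ⧸ W.toSubmodule) := rfl
      omega
    obtain ⟨k, hk⟩ := (LieModule.isNilpotent_iff K g (M ⧸ W)).mp (ihm (M ⧸ W) hfrQ hnilQ)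
    refine LieModule.IsNilpotent.mk (R := K) (L := g) M (k := k + 1) ?_
    have hmap : (lowerCentralSeries K g M k).map (LieSubmodule.Quotient.mk' W) = ⊥ := by
      rw [LieModule.map_lowerCentralSeries_eq k (LieSubmodule.Quotient.surjective_mk' W), hk]
    have hle : lowerCentralSeries K g M k ≤ W :=
      (LieSubmodule.Quotient.map_mk'_eq_bot_le _ _).mp hmap
    rw [LieModule.lowerCentralSeries_succ]
    have := LieSubmodule.mono_lie_right (⊤ : LieIdeal K g) hle
    refine le_bot_iff.mp (this.trans ?_)
    rw [hW_def]
    rw [LieModule.ideal_oper_maxTrivSubmodule_eq_bot]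
end nil


/-- Let `L` be a `Γ`-graded finite-dimensional complex Lie algebra of
operators on a finite-dimensional space, graded by a finite abelian group `Γ`. If every
homogeneous element `a` (i.e. `a ∈ L_γ` for some `γ`) has `ad a` nilpotent on `L`,
then `L` is solvable. -/
theorem graded_homogeneous_ad_nilpotent_isSolvable
    {V : Type*} [AddCommGroup V] [Module ℂ V] [FiniteDimensional ℂ V]
    {Γ : Type*} [AddCommGroup Γ] [Fintype Γ]
    (L : LieSubalgebra ℂ (Module.End ℂ V))
    (Lc : Γ → Submodule ℂ (Module.End ℂ V))
    (hle : ∀ γ, Lc γ ≤ L.toSubmodule)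
    (hindep : iSupIndep Lc)
    (hsup : (⨆ γ, Lc γ) = L.toSubmodule)
    (hgrad : ∀ γ δ : Γ, ∀ x ∈ Lc γ, ∀ y ∈ Lc δ, ⁅x, y⁆ ∈ Lc (γ + δ))
    (hnil : ∀ γ : Γ, ∀ a : Module.End ℂ V, ∀ haL : a ∈ L,
      a ∈ Lc γ → IsNilpotent (LieAlgebra.ad ℂ L ⟨a, haL⟩)) :
    LieAlgebra.IsSolvable L := by
  classical
  haveI : FiniteDimensional ℂ L := inferInstanceAs (FiniteDimensional ℂ L.toSubmodule)
  set C : Γ → Submodule ℂ L := fun γ => (Lc γ).comap (L.incl : L →ₗ⁅ℂ⁆ Module.End ℂ V).toLinearMap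
    with hC_def
  have hmemC : ∀ (γ : Γ) (x : L), x ∈ C γ ↔ (x : Module.End ℂ V) ∈ Lc γ := fun γ x => Iff.rfl
  have hsupC : (⨆ γ, C γ) = ⊤ := by
    rw [eq_top_iff]
    rintro ⟨x, hx⟩ -
    have hx' : x ∈ ⨆ γ, Lc γ := hsup ▸ hx
    rw [Submodule.mem_iSup_iff_exists_finsupp] at hx'
    obtain ⟨f, hf, hsum⟩ := hx'
    have hcL : ∀ γ, f γ ∈ L.toSubmodule := fun γ => hle γ (hf γ)
    have hsum' : ∑ γ, f γ = x := by
      rw [← hsum, Finsupp.sum]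
      exact (Finset.sum_subset (Finset.subset_univ _)
        (fun i _ h => Finsupp.notMem_support_iff.mp h)).symm
    have hxs : (⟨x, hx⟩ : L) = ∑ γ, (⟨f γ, hcL γ⟩ : L) := by
      apply Subtype.ext
      show x = _
      have h0 := map_sum (L.incl : L →ₗ⁅ℂ⁆ Module.End ℂ V).toLinearMap
        (fun γ => (⟨f γ, hcL γ⟩ : L)) Finset.univ
      rw [← hsum']
      simpa using h0.symm
    rw [hxs]
    exact Submodule.sum_mem _ fun γ _ => Submodule.mem_iSup_of_mem γ ((hmemC γ _).mpr (hf γ))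
  have hzC : ∀ c : Γ → L, (∀ γ, c γ ∈ C γ) → ∑ γ, c γ = 0 → ∀ γ, c γ = 0 := by
    intro c hc hsum γ
    have hcoe : ∑ δ, ((c δ : Module.End ℂ V)) = 0 := by
      have h0 := map_sum (L.incl : L →ₗ⁅ℂ⁆ Module.End ℂ V).toLinearMap c Finset.univ
      rw [hsum] at h0
      simpa using h0.symm
    have hmemγ : (c γ : Module.End ℂ V) ∈ Lc γ := (hmemC γ _).mp (hc γ)
    have hrest : (c γ : Module.End ℂ V) ∈ ⨆ δ, ⨆ (_ : δ ≠ γ), Lc δ := by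
      have : (c γ : Module.End ℂ V) = -∑ δ ∈ Finset.univ.erase γ, (c δ : Module.End ℂ V) := by
        have h1 : ∑ δ, ((c δ : Module.End ℂ V)) =
            (c γ : Module.End ℂ V) + ∑ δ ∈ Finset.univ.erase γ, (c δ : Module.End ℂ V) :=
          (Finset.add_sum_erase _ _ (Finset.mem_univ γ)).symm
        rw [h1] at hcoe
        exact eq_neg_of_add_eq_zero_left hcoe
      rw [this]
      refine Submodule.neg_mem _ (Submodule.sum_mem _ fun δ hδ => ?_)
      have hδγ : δ ≠ γ := Finset.ne_of_mem_erase hδ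
      exact Submodule.mem_iSup_of_mem δ (Submodule.mem_iSup_of_mem hδγ ((hmemC δ _).mp (hc δ)))
    have := (hindep γ).le_bot ⟨hmemγ, hrest⟩
    rw [Submodule.mem_bot] at this
    exact Subtype.ext this
  have hgradC : ∀ γ δ : Γ, ∀ x ∈ C γ, ∀ y ∈ C δ, ⁅x, y⁆ ∈ C (γ + δ) := by
    intro γ δ x hx y hy
    rw [hmemC] at hx hy ⊢
    simpa using hgrad γ δ _ hx _ hy
  have hniladC : ∀ γ, ∀ a ∈ C γ, IsNilpotent (LieAlgebra.ad ℂ L a) := by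
    intro γ a haC
    exact hnil γ (a : Module.End ℂ V) a.2 ((hmemC γ a).mp haC)
  have hnilMC : ∀ γ, ∀ a ∈ C γ, IsNilpotent (LieModule.toEnd ℂ L L a) := hniladC
  have hnilp : LieModule.IsNilpotent L L :=
    nil_lemma L C hsupC hzC hgradC hniladC (Module.finrank ℂ L) L le_rfl hnilMC
  haveI : LieModule.IsNilpotent L L := hnilp
  infer_instance
end

section
/- Let J be a Jordan subalgebra of an associative algebra A and I a Jordan ideal of J (i.e., J∘I ⊆ I, where x∘y = xy+yx). Define ℒ(J,I) = I + [J,I], ℒ(I) = I + [I,I], ℒ(J) = J + [J,J] (spans of commutators). Then ℒ(J,I) is a Lie subalgebra, ℒ(I) is a Lie ideal of ℒ(J,I), and ℒ(J,I) is a Lie ideal of ℒ(J). -/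
section Aux

attribute [local instance] LieRing.ofAssociativeRing

variable {A : Type*} [Ring A] [Algebra ℂ A]

private lemma span_bracket (s t : Set A) (M : Submodule ℂ A)
    (h : ∀ x ∈ s, ∀ y ∈ t, ⁅x, y⁆ ∈ M) :
    ∀ x ∈ Submodule.span ℂ s, ∀ y ∈ Submodule.span ℂ t, ⁅x, y⁆ ∈ M := by
  have h1 : ∀ y ∈ Submodule.span ℂ t, ∀ x ∈ s, ⁅x, y⁆ ∈ M := by
    intro y hy
    induction hy using Submodule.span_induction with
    | mem y hy => intro x hx; exact h x hx y hy
    | zero => intro x hx; simp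
    | add y z _ _ hy hz => intro x hx; rw [lie_add]; exact M.add_mem (hy x hx) (hz x hx)
    | smul c y _ hy => intro x hx; rw [lie_smul]; exact M.smul_mem _ (hy x hx)
  intro x hx y hy
  induction hx using Submodule.span_induction with
  | mem x hx => exact h1 y hy x hx
  | zero => simp
  | add u v _ _ hu hv => rw [add_lie]; exact M.add_mem hu hv
  | smul c u _ hu => rw [smul_lie]; exact M.smul_mem _ hu

private lemma key1 (J I : Submodule ℂ A)
    (hJordan : ∀ a ∈ J, ∀ b ∈ J, a * b + b * a ∈ J)
    (hIdeal : ∀ a ∈ J, ∀ b ∈ I, a * b + b * a ∈ I) :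
    ∀ a ∈ J, ∀ b ∈ J, ∀ c ∈ I, ⁅a, ⁅b, c⁆⁆ ∈ I := by
  intro a ha b hb c hc
  have e : ⁅a, ⁅b, c⁆⁆ =
      ((a * b + b * a) * c + c * (a * b + b * a)) -
      (b * (a * c + c * a) + (a * c + c * a) * b) := by
    simp only [Ring.lie_def]; noncomm_ring
  rw [e]
  exact I.sub_mem (hIdeal _ (hJordan a ha b hb) c hc)
    (hIdeal b hb _ (hIdeal a ha c hc))

private lemma key2 (J I : Submodule ℂ A)
    (hIdeal : ∀ a ∈ J, ∀ b ∈ I, a * b + b * a ∈ I) :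
    ∀ c ∈ I, ∀ a ∈ J, ∀ b ∈ J, ⁅c, ⁅a, b⁆⁆ ∈ I := by
  intro c hc a ha b hb
  have e : ⁅c, ⁅a, b⁆⁆ =
      (b * (a * c + c * a) + (a * c + c * a) * b) -
      (a * (b * c + c * b) + (b * c + c * b) * a) := by
    simp only [Ring.lie_def]; noncomm_ring
  rw [e]
  exact I.sub_mem (hIdeal b hb _ (hIdeal a ha c hc))
    (hIdeal a ha _ (hIdeal b hb c hc))

end Aux

/-- The span of all commutators `⁅u, v⁆` with `u ∈ U`, `v ∈ V`. -/
def commutatorSpan {A : Type*} [Ring A] [Algebra ℂ A]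
    (U V : Submodule ℂ A) : Submodule ℂ A :=
  Submodule.span ℂ {z : A | ∃ u ∈ U, ∃ v ∈ V, z = ⁅u, v⁆}

/-- Let `J` be a Jordan subalgebra of an associative algebra `A` and `I`
a Jordan ideal of `J`. Define `ℒ(J,I) = I + [J,I]`, `ℒ(I) = I + [I,I]`, `ℒ(J) = J + [J,J]`.
Then `ℒ(J,I)` is a Lie subalgebra, `ℒ(I)` is a Lie ideal of `ℒ(J,I)`, and `ℒ(J,I)` is a Lie
ideal of `ℒ(J)`. -/
theorem jordan_ideal_lie_ideal_series
    {A : Type*} [Ring A] [Algebra ℂ A]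
    (J I : Submodule ℂ A)
    (hIJ : I ≤ J)
    (hJordan : ∀ a ∈ J, ∀ b ∈ J, a * b + b * a ∈ J)
    (hIdeal : ∀ a ∈ J, ∀ b ∈ I, a * b + b * a ∈ I) :
    (I ⊔ commutatorSpan I I) ≤ (I ⊔ commutatorSpan J I) ∧
    (I ⊔ commutatorSpan J I) ≤ (J ⊔ commutatorSpan J J) ∧
    (∀ x ∈ I ⊔ commutatorSpan J I, ∀ y ∈ I ⊔ commutatorSpan J I,
        ⁅x, y⁆ ∈ I ⊔ commutatorSpan J I) ∧
    (∀ x ∈ I ⊔ commutatorSpan J I, ∀ y ∈ I ⊔ commutatorSpan I I,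
        ⁅x, y⁆ ∈ I ⊔ commutatorSpan I I) ∧
    (∀ x ∈ J ⊔ commutatorSpan J J, ∀ y ∈ I ⊔ commutatorSpan J I,
        ⁅x, y⁆ ∈ I ⊔ commutatorSpan J I) := by
  letI : LieRing A := LieRing.ofAssociativeRing
  have K1 := key1 J I hJordan hIdeal
  have K2 := key2 J I hIdeal
  have hspanJI : I ⊔ commutatorSpan J I =
      Submodule.span ℂ ((I : Set A) ∪ {z : A | ∃ u ∈ J, ∃ v ∈ I, z = ⁅u, v⁆}) := by
    rw [Submodule.span_union, Submodule.span_eq]; rfl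
  have hspanII : I ⊔ commutatorSpan I I =
      Submodule.span ℂ ((I : Set A) ∪ {z : A | ∃ u ∈ I, ∃ v ∈ I, z = ⁅u, v⁆}) := by
    rw [Submodule.span_union, Submodule.span_eq]; rfl
  have hspanJJ : J ⊔ commutatorSpan J J =
      Submodule.span ℂ ((J : Set A) ∪ {z : A | ∃ u ∈ J, ∃ v ∈ J, z = ⁅u, v⁆}) := by
    rw [Submodule.span_union, Submodule.span_eq]; rfl
  have memJI : ∀ a ∈ J, ∀ c ∈ I, ⁅a, c⁆ ∈ I ⊔ commutatorSpan J I := fun a ha c hc =>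
    Submodule.mem_sup_right (Submodule.subset_span ⟨a, ha, c, hc, rfl⟩)
  have memII : ∀ a ∈ I, ∀ c ∈ I, ⁅a, c⁆ ∈ I ⊔ commutatorSpan I I := fun a ha c hc =>
    Submodule.mem_sup_right (Submodule.subset_span ⟨a, ha, c, hc, rfl⟩)
  have hmono1 : commutatorSpan I I ≤ commutatorSpan J I := by
    apply Submodule.span_mono
    rintro z ⟨u, hu, v, hv, hz⟩
    exact ⟨u, hIJ hu, v, hv, hz⟩
  have hmono2 : commutatorSpan J I ≤ commutatorSpan J J := by
    apply Submodule.span_mono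
    rintro z ⟨u, hu, v, hv, hz⟩
    exact ⟨u, hu, v, hIJ hv, hz⟩
  refine ⟨sup_le_sup_left hmono1 I, sup_le_sup hIJ hmono2, ?_, ?_, ?_⟩
  · intro x hx y hy
    rw [hspanJI] at hx hy
    refine span_bracket _ _ _ ?_ x hx y hy
    rintro x (hx | ⟨a, ha, c, hc, rfl⟩) y (hy | ⟨b, hb, d, hd, rfl⟩)
    · exact memJI x (hIJ hx) y hy
    · exact Submodule.mem_sup_left (K1 x (hIJ hx) b hb d hd)
    · rw [← lie_skew]
      exact (I ⊔ commutatorSpan J I).neg_mem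
        (Submodule.mem_sup_left (K1 y (hIJ hy) a ha c hc))
    · rw [leibniz_lie]
      refine Submodule.add_mem _ ?_ ?_
      · have h1 : ⁅(⁅a, c⁆), b⁆ ∈ I := by
          rw [← lie_skew]; exact I.neg_mem (K1 b hb a ha c hc)
        exact memJI _ (hIJ h1) d hd
      · have h2 : ⁅(⁅a, c⁆), d⁆ ∈ I := by
          rw [← lie_skew]; exact I.neg_mem (K1 d (hIJ hd) a ha c hc)
        exact memJI b hb _ h2
  · intro x hx y hy
    rw [hspanJI] at hx
    rw [hspanII] at hy
    refine span_bracket _ _ _ ?_ x hx y hy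
    rintro x (hx | ⟨a, ha, c, hc, rfl⟩) y (hy | ⟨b, hb, d, hd, rfl⟩)
    · exact memII x hx y hy
    · exact Submodule.mem_sup_left (K1 x (hIJ hx) b (hIJ hb) d hd)
    · rw [← lie_skew]
      exact (I ⊔ commutatorSpan I I).neg_mem
        (Submodule.mem_sup_left (K1 y (hIJ hy) a ha c hc))
    · rw [leibniz_lie]
      refine Submodule.add_mem _ ?_ ?_
      · have h1 : ⁅(⁅a, c⁆), b⁆ ∈ I := by
          rw [← lie_skew]; exact I.neg_mem (K1 b (hIJ hb) a ha c hc)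
        exact memII _ h1 d hd
      · have h2 : ⁅(⁅a, c⁆), d⁆ ∈ I := by
          rw [← lie_skew]; exact I.neg_mem (K1 d (hIJ hd) a ha c hc)
        exact memII b hb _ h2
  · intro x hx y hy
    rw [hspanJJ] at hx
    rw [hspanJI] at hy
    refine span_bracket _ _ _ ?_ x hx y hy
    rintro x (hx | ⟨a, ha, b, hb, rfl⟩) y (hy | ⟨u, hu, c, hc, rfl⟩)
    · exact memJI x hx y hy
    · exact Submodule.mem_sup_left (K1 x hx u hu c hc)
    · rw [← lie_skew]
      exact (I ⊔ commutatorSpan J I).neg_mem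
        (Submodule.mem_sup_left (K2 y hy a ha b hb))
    · rw [← lie_skew ⁅a, b⁆ ⁅u, c⁆, leibniz_lie]
      refine Submodule.neg_mem _ (Submodule.add_mem _ ?_ ?_)
      · have h1 : ⁅(⁅u, c⁆), a⁆ ∈ I := by
          rw [← lie_skew]; exact I.neg_mem (K1 a ha u hu c hc)
        rw [← lie_skew _ b]
        exact Submodule.neg_mem _ (memJI b hb _ h1)
      · have h2 : ⁅(⁅u, c⁆), b⁆ ∈ I := by
          rw [← lie_skew]; exact I.neg_mem (K1 b hb u hu c hc)
        exact memJI a ha _ h2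
end

section
/- Let L = L₀ ⊕ L₁ be a ℤ₂-graded Lie algebra of operators on a finite-dimensional complex space where L₀ = span[L₁,L₁] and every element of L₁ is nilpotent. Then tr(xy) = 0 for all x, y ∈ L₀. -/
/-- Let `L = L₀ ⊕ L₁` be a `ℤ₂`-graded Lie algebra of operators on a
finite-dimensional complex space where `L₀ = span [L₁, L₁]` and every element of `L₁` is
nilpotent. Then `tr(xy) = 0` for all `x, y ∈ L₀`. -/
theorem trace_zero_component_of_z2_graded_nilpotent_odd_part
    {V : Type*} [AddCommGroup V] [Module ℂ V] [FiniteDimensional ℂ V]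
    (L₀ L₁ : Submodule ℂ (Module.End ℂ V))
    (hdisj : Disjoint L₀ L₁)
    (hL₀ : L₀ = Submodule.span ℂ
      {z : Module.End ℂ V | ∃ a ∈ L₁, ∃ b ∈ L₁, z = ⁅a, b⁆})
    (hgrad01 : ∀ x ∈ L₀, ∀ y ∈ L₁, ⁅x, y⁆ ∈ L₁)
    (hgrad00 : ∀ x ∈ L₀, ∀ y ∈ L₀, ⁅x, y⁆ ∈ L₀)
    (hnil : ∀ a ∈ L₁, IsNilpotent a) :
    ∀ x ∈ L₀, ∀ y ∈ L₀, LinearMap.trace ℂ V (x * y) = 0 := by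
  -- trace of a nilpotent endomorphism is zero
  have htr0 : ∀ f : Module.End ℂ V, IsNilpotent f → LinearMap.trace ℂ V f = 0 := by
    intro f hf
    exact (LinearMap.isNilpotent_trace_of_isNilpotent hf).eq_zero
  -- trace(a*c) = 0 for a, c ∈ L₁
  have hL1 : ∀ a ∈ L₁, ∀ c ∈ L₁, LinearMap.trace ℂ V (a * c) = 0 := by
    intro a ha c hc
    have hsq : ∀ f : Module.End ℂ V, IsNilpotent f →
        LinearMap.trace ℂ V (f * f) = 0 := by
      intro f hf
      obtain ⟨n, hn⟩ := hf
      refine htr0 _ ⟨n, ?_⟩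
      rw [(Commute.refl f).mul_pow n, hn, mul_zero]
    have h1 := hsq _ (hnil a ha)
    have h2 := hsq _ (hnil c hc)
    have h3 := hsq _ (hnil (a + c) (L₁.add_mem ha hc))
    have hcomm : LinearMap.trace ℂ V (a * c) = LinearMap.trace ℂ V (c * a) :=
      LinearMap.trace_mul_comm ℂ a c
    have hexp : (a + c) * (a + c) = a * a + (a * c + (c * a + c * c)) := by noncomm_ring
    rw [hexp, map_add, map_add, map_add, h1, h2] at h3
    linear_combination hcomm / 2 + h3 / 2
  -- main statement
  intro x hx y hy
  rw [hL₀] at hx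
  induction hx using Submodule.span_induction with
  | mem z hz =>
    obtain ⟨a, ha, b, hb, rfl⟩ := hz
    -- trace(⁅a,b⁆ * y) = trace(a * ⁅b,y⁆)
    have hby : ⁅b, y⁆ ∈ L₁ := by
      have := hgrad01 y hy b hb
      have hneg : ⁅b, y⁆ = -⁅y, b⁆ := by rw [Ring.lie_def, Ring.lie_def]; noncomm_ring
      rw [hneg]; exact L₁.neg_mem this
    have key : LinearMap.trace ℂ V (⁅a, b⁆ * y) = LinearMap.trace ℂ V (a * ⁅b, y⁆) := by
      have e1 : ⁅a, b⁆ * y = a * b * y - b * a * y := by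
        rw [Ring.lie_def]; noncomm_ring
      have e2 : a * ⁅b, y⁆ = a * (b * y) - a * (y * b) := by
        rw [Ring.lie_def]; noncomm_ring
      rw [e1, e2, map_sub, map_sub, mul_assoc a b y]
      congr 1
      rw [LinearMap.trace_mul_comm ℂ (b * a) y,
        LinearMap.trace_mul_comm ℂ a (y * b), mul_assoc]
    rw [key]
    exact hL1 a ha _ hby
  | zero => simp
  | add u v hu hv ihu ihv => rw [add_mul, map_add, ihu, ihv, add_zero]
  | smul c u hu ihu => rw [smul_mul_assoc, map_smul, ihu, smul_zero]
end
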